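/- Let f : ℤ → ℤ be a bounded affine permutation in Bound(k,n), i.e. f(i+n) = f(i)+n and i ≤ f(i) ≤ i+n for all i, with (1/n)∑_{i=1}^n (f(i)-i) = k. Suppose further that the subsequence of (f(1), ..., f(n)) consisting of entries lying in [n] is increasing. Define b_1 < ... < b_k as the i ∈ [n] with f(i) > n, a_i = f(b_i) - n, and M = {[a_1,b_1],...,[a_k,b_k]}. Then M is a rank set with all b_i ≤ n, and the associated affine permutation f_M equals f. This gives a bijection between such bounded affine permutations and rank sets for Gr(k,n). -/

import Mathlib

/-- A bounded affine permutation `f ∈ Bound(k,n)` whose subsequence of window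
entries lying in `[n]` is increasing arises from a rank set: with `b` the
increasing enumeration of `{i ∈ [n] : f i > n}` and `a_i = f(b_i) - n`,
the intervals `[a_i, b_i]` form a rank set with `b_i ≤ n`, and the associated
affine permutation `f_M` (sending `b_i ↦ a_i + n` and the ordered complement
`d` of the `b`'s to the ordered complement `c` of the `a`'s) equals `f`. -/
theorem stmt17 (n k : ℕ) (hn : 1 ≤ n) (hkn : k ≤ n)
    (f : ℤ → ℤ) (hbij : Function.Bijective f)
    (hper : ∀ i : ℤ, f (i + n) = f i + n)
    (hbound : ∀ i : ℤ, i ≤ f i ∧ f i ≤ i + n)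
    (hav : ∑ i ∈ Finset.Icc (1 : ℤ) n, (f i - i) = k * n)
    (hincr : ∀ i j : ℤ, 1 ≤ i → i < j → j ≤ n → f i ≤ n → f j ≤ n → f i < f j)
    (b : Fin k → ℤ) (hbmono : StrictMono b)
    (hbrange : ∀ x : ℤ, (∃ i, b i = x) ↔ (1 ≤ x ∧ x ≤ n ∧ (n : ℤ) < f x))
    (c d : Fin (n - k) → ℤ)
    (hcmono : StrictMono c) (hdmono : StrictMono d)
    (hcrange : ∀ x : ℤ, (∃ i, c i = x) ↔ (1 ≤ x ∧ x ≤ n ∧ ∀ j, f (b j) - n ≠ x))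
    (hdrange : ∀ x : ℤ, (∃ i, d i = x) ↔ (1 ≤ x ∧ x ≤ n ∧ ∀ j, b j ≠ x)) :
    (∀ i : Fin k, 1 ≤ f (b i) - n ∧ f (b i) - n ≤ b i ∧ b i ≤ n) ∧
    Function.Injective (fun i : Fin k => f (b i) - n) ∧
    Function.Injective b ∧
    (∀ i : Fin (n - k), f (d i) = c i) := by
  have hb : ∀ i : Fin k, 1 ≤ b i ∧ b i ≤ n ∧ (n : ℤ) < f (b i) := by
    intro i
    exact (hbrange (b i)).1 ⟨i, rfl⟩
  have hd : ∀ i : Fin (n - k), 1 ≤ d i ∧ d i ≤ n ∧ ∀ j, b j ≠ d i := by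
    intro i
    exact (hdrange (d i)).1 ⟨i, rfl⟩
  refine ⟨?_, ?_, hbmono.injective, ?_⟩
  · intro i
    obtain ⟨h1, h2, h3⟩ := hb i
    refine ⟨by linarith, by linarith [(hbound (b i)).2], h2⟩
  · intro i j hij
    simp only at hij
    exact hbmono.injective (hbij.injective (by linarith : f (b i) = f (b j)))
  · -- key part: f ∘ d = c
    have hfd_le : ∀ i : Fin (n - k), f (d i) ≤ n := by
      intro i
      obtain ⟨h1, h2, h3⟩ := hd i
      by_contra h
      push_neg at h
      obtain ⟨j, hj⟩ := (hbrange (d i)).2 ⟨h1, h2, h⟩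
      exact h3 j hj
    have hmono : StrictMono (fun i => f (d i)) := by
      intro i j hij
      obtain ⟨h1, h2, _⟩ := hd i
      obtain ⟨h1', h2', _⟩ := hd j
      exact hincr _ _ h1 (hdmono hij) h2' (hfd_le i) (hfd_le j)
    have hrange : Set.range (fun i => f (d i)) = Set.range c := by
      ext x
      simp only [Set.mem_range]
      rw [hcrange x]
      constructor
      · rintro ⟨i, rfl⟩
        obtain ⟨h1, h2, h3⟩ := hd i
        refine ⟨by linarith [(hbound (d i)).1], hfd_le i, ?_⟩
        intro j hj
        obtain ⟨hb1, hb2, _⟩ := hb j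
        have h := hper (b j - n)
        rw [show b j - (n:ℤ) + n = b j from by ring] at h
        have : f (b j - n) = f (d i) := by linarith
        have := hbij.injective this
        linarith
      · rintro ⟨h1, h2, h3⟩
        obtain ⟨y, rfl⟩ := hbij.surjective x
        have hy1 := (hbound y).1
        have hy2 := (hbound y).2
        rcases le_or_gt 1 y with hy | hy
        · have hby : ∀ j, b j ≠ y := by
            intro j hj
            obtain ⟨hb1, hb2, hb3⟩ := hb j
            rw [hj] at hb3; linarith
          obtain ⟨i, hi⟩ := (hdrange y).2 ⟨hy, by linarith, hby⟩
          exact ⟨i, by rw [hi]⟩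
        · -- y ≤ 0, then y + n ∈ [1, n] and f (y+n) > n
          have hyn1 : (1 : ℤ) ≤ y + n := by linarith
          have hyn2 : y + n ≤ n := by linarith
          have hfyn : (n : ℤ) < f (y + n) := by rw [hper]; linarith
          obtain ⟨j, hj⟩ := (hbrange (y + n)).2 ⟨hyn1, hyn2, hfyn⟩
          exfalso
          exact h3 j (by rw [hj, hper]; ring)
    have hwf : WellFoundedLT (Fin (n - k)) := inferInstance
    have heq : (fun i => f (d i)) = c := (StrictMono.range_inj hmono hcmono).1 hrange
    intro i
    exact congrFun heq i
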